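/- Let 𝒫 be a finite set of properties with scoring functions γ_p : ℝⁿ → ℝ. Suppose the weak epistemic pooling principle holds for componentwise max-pooling for all e, f ∈ ℝⁿ (for every p ∈ 𝒫, γ_p(max(e,f)) ≥ 0 ↔ γ_p(e) ≥ 0 ∨ γ_p(f) ≥ 0), and suppose every weak epistemic state is realized: for every subset Q' ⊆ 𝒫 there exists e ∈ ℝⁿ with Γ'(e) = Q', where Γ'(e) = {p ∈ 𝒫 : γ_p(e) ≥ 0}. Let Q = {p_1,...,p_k} be a nonempty subset of 𝒫 and let γ_Q : ℝⁿ → ℝ be such that for all e ∈ ℝⁿ, γ_Q(e) ≥ 0 ↔ (γ_p(e) ≥ 0 for every p ∈ Q). If γ_Q and every γ_p with p ∈ Q are affine functions (each of the form x ↦ ⟨w, x⟩ + b for some w ∈ ℝⁿ and b ∈ ℝ), then |Q| = 1. -/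
import Mathlib

private lemma bump_sum' {n : ℕ} (w u : Fin n → ℝ) (j : Fin n) (t : ℝ) :
    ∑ i, w i * (if i = j then u i + t else u i) = (∑ i, w i * u i) + w j * t := by
  have h : ∀ i : Fin n, w i * (if i = j then u i + t else u i)
      = w i * u i + (if i = j then w i * t else 0) := by
    intro i; split <;> simp_all <;> ring
  rw [Finset.sum_congr rfl (fun i _ => h i), Finset.sum_add_distrib]
  simp

private lemma bump_max' {n : ℕ} (u : Fin n → ℝ) (j : Fin n) (t : ℝ) (ht : 0 ≤ t) :
    (fun i => max (u i) (if i = j then u i + t else u i))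
      = (fun i => if i = j then u i + t else u i) := by
  funext i
  by_cases h : i = j <;> simp [h]
  exact ht

private lemma div_nonneg_of_nonpos_of_nonpos' {a b : ℝ} (ha : a ≤ 0) (hb : b ≤ 0) : 0 ≤ a / b := by
  rcases eq_or_lt_of_le hb with h | h
  · subst h; simp
  · rcases eq_or_lt_of_le ha with h2 | h2
    · subst h2; simp
    · exact (div_pos_of_neg_of_neg h2 h).le

private lemma slope_nonneg' {A W : ℝ} (h : ∀ t, 0 ≤ t → A + W * t ≥ 0) : 0 ≤ W := by
  by_contra hW
  push_neg at hW
  have hWne : W ≠ 0 := ne_of_lt hW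
  have hA : A ≥ 0 := by have := h 0 le_rfl; linarith
  have ht : 0 ≤ -(A + 1) / W := div_nonneg_of_nonpos_of_nonpos' (by linarith) (by linarith)
  have h2 := h _ ht
  have h3 : W * (-(A + 1) / W) = -(A + 1) := by rw [mul_comm, div_mul_cancel₀ _ hWne]
  linarith

private lemma threshold_eq' {A B W V : ℝ} (hA : A < 0) (hB : B < 0) (hW : 0 ≤ W) (hV : 0 ≤ V)
    (h : ∀ t, 0 ≤ t → (A + W * t ≥ 0 ↔ B + V * t ≥ 0)) : B * W = A * V := by
  rcases hW.eq_or_lt with hW0 | hWpos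
  · rcases hV.eq_or_lt with hV0 | hVpos
    · rw [← hW0, ← hV0]; ring
    · exfalso
      have hVne : V ≠ 0 := ne_of_gt hVpos
      have ht : 0 ≤ -B / V := div_nonneg (by linarith) (by linarith)
      have h1 := (h _ ht).mpr (by rw [show B + V * (-B / V) = 0 by field_simp; ring])
      rw [← hW0] at h1; linarith
  · have hWne : W ≠ 0 := ne_of_gt hWpos
    rcases hV.eq_or_lt with hV0 | hVpos
    · exfalso
      have ht : 0 ≤ -A / W := div_nonneg (by linarith) (by linarith)
      have h1 := (h _ ht).mp (by rw [show A + W * (-A / W) = 0 by field_simp; ring])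
      rw [← hV0] at h1; linarith
    · have hVne : V ≠ 0 := ne_of_gt hVpos
      have ht1 : 0 ≤ -A / W := div_nonneg (by linarith) (by linarith)
      have h1 := (h _ ht1).mp (by rw [show A + W * (-A / W) = 0 by field_simp; ring])
      have e1 : (B + V * (-A / W)) * W = B * W - A * V := by field_simp; ring
      have ht2 : 0 ≤ -B / V := div_nonneg (by linarith) (by linarith)
      have h2 := (h _ ht2).mpr (by rw [show B + V * (-B / V) = 0 by field_simp; ring])
      have e2 : (A + W * (-B / V)) * V = A * V - B * W := by field_simp; ring
      nlinarith

/-- Under the weak semantics with max-pooling on all of ℝⁿ, where the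
weak epistemic pooling principle holds and every weak epistemic state is realized,
if a joint scoring function γ_Q for a nonempty Q ⊆ 𝒫 and all the scoring functions
γ_p with p ∈ Q are affine, then |Q| = 1. -/
theorem max_pooling_weak_linear_joint_scoring_trivial (n : ℕ) (P : Type*) [Fintype P]
    (γ : P → (Fin n → ℝ) → ℝ)
    (hpool : ∀ e f : Fin n → ℝ, ∀ p : P,
      γ p (fun i => max (e i) (f i)) ≥ 0 ↔ (γ p e ≥ 0 ∨ γ p f ≥ 0))
    (hreal : ∀ Q' : Set P, ∃ e : Fin n → ℝ, ∀ p : P, γ p e ≥ 0 ↔ p ∈ Q')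
    (Q : Finset P) (hQ : Q.Nonempty)
    (γQ : (Fin n → ℝ) → ℝ)
    (hlink : ∀ e : Fin n → ℝ, γQ e ≥ 0 ↔ ∀ p ∈ Q, γ p e ≥ 0)
    (haffQ : ∃ (w : Fin n → ℝ) (b : ℝ), ∀ x, γQ x = (∑ i, w i * x i) + b)
    (haffp : ∀ p ∈ Q, ∃ (w : Fin n → ℝ) (b : ℝ), ∀ x, γ p x = (∑ i, w i * x i) + b) :
    Q.card = 1 := by
  by_contra hcard
  obtain ⟨p, hp⟩ := hQ
  obtain ⟨q, hq, hqp⟩ : ∃ q ∈ Q, q ≠ p := by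
    by_contra h
    push_neg at h
    exact hcard (by rw [Finset.eq_singleton_iff_unique_mem.mpr ⟨hp, fun x hx => h x hx⟩]; simp)
  obtain ⟨w, b, hg⟩ := haffQ
  obtain ⟨vq, aq, hgq⟩ := haffp q hq
  obtain ⟨vp, ap, hgp⟩ := haffp p hp
  obtain ⟨z, hz⟩ := hreal Set.univ
  obtain ⟨e, he⟩ := hreal {r | r ≠ q}
  obtain ⟨f, hf⟩ := hreal {r | r ≠ p}
  simp only [Set.mem_setOf_eq, Set.mem_univ, iff_true] at hz he hf
  -- basic sign facts
  have γqE : γ q e < 0 := by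
    by_contra h; push_neg at h
    exact ((he q).mp h) rfl
  have γpE : γ p e ≥ 0 := (he p).mpr (Ne.symm hqp)
  have γpF : γ p f < 0 := by
    by_contra h; push_neg at h
    exact ((hf p).mp h) rfl
  have γqF : γ q f ≥ 0 := (hf q).mpr hqp
  have gE : γQ e < 0 := by
    by_contra h; push_neg at h
    exact absurd ((hlink e).mp h q hq) (not_le.mpr γqE)
  have gF : γQ f < 0 := by
    by_contra h; push_neg at h
    exact absurd ((hlink f).mp h p hp) (not_le.mpr γpF)
  -- key pooling characterizations
  have key_e : ∀ c : Fin n → ℝ, (γQ (fun i => max (e i) (c i)) ≥ 0) ↔ γ q c ≥ 0 := by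
    intro c
    rw [hlink]
    constructor
    · intro h
      rcases (hpool e c q).mp (h q hq) with h1 | h2
      · exact absurd h1 (not_le.mpr γqE)
      · exact h2
    · intro hc r hr
      refine (hpool e c r).mpr ?_
      by_cases hrq : r = q
      · subst hrq; right; exact hc
      · left; exact (he r).mpr hrq
  have key_f : ∀ c : Fin n → ℝ, (γQ (fun i => max (f i) (c i)) ≥ 0) ↔ γ p c ≥ 0 := by
    intro c
    rw [hlink]
    constructor
    · intro h
      rcases (hpool f c p).mp (h p hp) with h1 | h2
      · exact absurd h1 (not_le.mpr γpF)
      · exact h2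
    · intro hc r hr
      refine (hpool f c r).mpr ?_
      by_cases hrp : r = p
      · subst hrp; right; exact hc
      · left; exact (hf r).mpr hrp
  -- γQ(max z c) ≥ 0 always
  have hzQ : ∀ c : Fin n → ℝ, γQ (fun i => max (z i) (c i)) ≥ 0 := by
    intro c
    rw [hlink]
    intro r hr
    exact (hpool z c r).mpr (Or.inl (hz r))
  -- nonnegativity of slopes
  have hWnn : ∀ j, 0 ≤ w j := by
    intro j
    apply slope_nonneg' (A := (∑ i, w i * z i) + b)
    intro t ht
    have h1 := hzQ (fun i => if i = j then z i + t else z i)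
    rw [bump_max' z j t ht, hg, bump_sum'] at h1
    linarith
  have hVqnn : ∀ j, 0 ≤ vq j := by
    intro j
    apply slope_nonneg' (A := (∑ i, vq i * z i) + aq)
    intro t ht
    have h1 := (hpool z (fun i => if i = j then z i + t else z i) q).mpr (Or.inl (hz q))
    rw [bump_max' z j t ht, hgq, bump_sum'] at h1
    linarith
  have hVpnn : ∀ j, 0 ≤ vp j := by
    intro j
    apply slope_nonneg' (A := (∑ i, vp i * z i) + ap)
    intro t ht
    have h1 := (hpool z (fun i => if i = j then z i + t else z i) p).mpr (Or.inl (hz p))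
    rw [bump_max' z j t ht, hgp, bump_sum'] at h1
    linarith
  -- proportionality via thresholds
  have rel_q : ∀ j, γ q e * w j = γQ e * vq j := by
    intro j
    apply threshold_eq' gE γqE (hWnn j) (hVqnn j)
    intro t ht
    have h1 := key_e (fun i => if i = j then e i + t else e i)
    rw [bump_max' e j t ht, hg, hgq, bump_sum', bump_sum'] at h1
    rw [hg e, hgq e]
    constructor
    · intro h2; have := h1.mp (by linarith); linarith
    · intro h2; have := h1.mpr (by linarith); linarith
  have rel_p : ∀ j, γ p f * w j = γQ f * vp j := by
    intro j
    apply threshold_eq' gF γpF (hWnn j) (hVpnn j)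
    intro t ht
    have h1 := key_f (fun i => if i = j then f i + t else f i)
    rw [bump_max' f j t ht, hg, hgp, bump_sum', bump_sum'] at h1
    rw [hg f, hgp f]
    constructor
    · intro h2; have := h1.mp (by linarith); linarith
    · intro h2; have := h1.mpr (by linarith); linarith
  -- sum the proportionality against any x
  have sum_q : ∀ x : Fin n → ℝ,
      γ q e * (∑ i, w i * x i) = γQ e * (∑ i, vq i * x i) := by
    intro x
    rw [Finset.mul_sum, Finset.mul_sum]
    refine Finset.sum_congr rfl fun i _ => ?_
    rw [← mul_assoc, rel_q i, mul_assoc]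
  have sum_p : ∀ x : Fin n → ℝ,
      γ p f * (∑ i, w i * x i) = γQ f * (∑ i, vp i * x i) := by
    intro x
    rw [Finset.mul_sum, Finset.mul_sum]
    refine Finset.sum_congr rfl fun i _ => ?_
    rw [← mul_assoc, rel_p i, mul_assoc]
  -- final contradiction
  set Se := ∑ i, w i * e i with hSe
  set Sf := ∑ i, w i * f i with hSf
  have hq1 : γ q e * Se = γQ e * (γ q e - aq) := by
    rw [sum_q e]; rw [hgq e]; ring
  have hq2 : γ q e * Sf = γQ e * (γ q f - aq) := by
    rw [sum_q f]; rw [hgq f]; ring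
  have hp1 : γ p f * Se = γQ f * (γ p e - ap) := by
    rw [sum_p e]; rw [hgp e]; ring
  have hp2 : γ p f * Sf = γQ f * (γ p f - ap) := by
    rw [sum_p f]; rw [hgp f]; ring
  -- from q: Se < Sf ; from p: Sf < Se
  have hdq : γ q e * (Se - Sf) = γQ e * (γ q e - γ q f) := by linarith [hq1, hq2]
  have hdp : γ p f * (Se - Sf) = γQ f * (γ p e - γ p f) := by linarith [hp1, hp2]
  have h1 : Se - Sf < 0 := by nlinarith
  have h2 : 0 < Se - Sf := by nlinarith
  linarith
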